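/- Let (X, d) be a metric space, φ : X → ℝ a c-concave function, x ∈ X with ∂^cφ(x) ≠ ∅, and define the ascending slope |D⁺φ|(x) := limsup_{z→x} (φ(z) − φ(x))⁺ / d(z,x) (taken 0 at isolated points). Then |D⁺φ|(x) ≤ inf_{y ∈ ∂^cφ(x)} d(x, y). -/
import Mathlib

/-- The `c`-transform with cost `c(x,y) = d(x,y)²/2`. -/
noncomputable def cTransform {X : Type*} [MetricSpace X] (ψ : X → EReal) : X → EReal :=
  fun y => ⨅ x : X, (((dist x y) ^ 2 / 2 : ℝ) : EReal) - ψ x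

lemma key {X : Type*} [MetricSpace X] (φ : X → ℝ) (x y : X)
    (h : ∀ z, φ z - φ x ≤ (dist z y ^ 2 - dist x y ^ 2) / 2) :
    Filter.limsup (fun z : X => max (φ z - φ x) 0 / dist z x) (nhdsWithin x {x}ᶜ) ≤ dist x y := by
  rcases Filter.eq_or_neBot (nhdsWithin x {x}ᶜ) with hb | hb
  · rw [hb]
    have : Filter.limsup (fun z : X => max (φ z - φ x) 0 / dist z x) (⊥ : Filter X) = 0 := by
      have h1 : Filter.limsup (fun z : X => max (φ z - φ x) 0 / dist z x) (⊥ : Filter X)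
          = sInf Set.univ := by simp [Filter.limsup, Filter.limsSup]
      rw [h1]
      exact Real.sInf_of_not_bddBelow (by simpa using Real.not_bddBelow_univ)
    rw [this]; positivity
  · have hle : ∀ᶠ z in nhdsWithin x {x}ᶜ,
        max (φ z - φ x) 0 / dist z x ≤ (dist z y + dist x y) / 2 := by
      filter_upwards [self_mem_nhdsWithin] with z hz
      have hd : (0:ℝ) < dist z x := dist_pos.2 hz
      rcases le_or_gt (φ z - φ x) 0 with h0 | h0
      · rw [max_eq_right h0, zero_div]
        positivity
      · rw [max_eq_left h0.le, div_le_iff₀ hd]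
        have habs : dist z y - dist x y ≤ dist z x :=
          le_trans (le_abs_self _) (abs_dist_sub_le z x y)
        have hnn : (0:ℝ) ≤ dist z y + dist x y := by positivity
        nlinarith [h z]
    have htend : Filter.Tendsto (fun z : X => (dist z y + dist x y) / 2)
        (nhdsWithin x {x}ᶜ) (nhds ((dist x y + dist x y) / 2)) := by
      apply Filter.Tendsto.mono_left _ nhdsWithin_le_nhds
      exact (((continuous_id.dist continuous_const).add continuous_const).div_const 2).tendsto x
    have h2 : Filter.limsup (fun z : X => (dist z y + dist x y) / 2) (nhdsWithin x {x}ᶜ)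
        = (dist x y + dist x y) / 2 := htend.limsup_eq
    calc Filter.limsup (fun z : X => max (φ z - φ x) 0 / dist z x) (nhdsWithin x {x}ᶜ)
        ≤ Filter.limsup (fun z : X => (dist z y + dist x y) / 2) (nhdsWithin x {x}ᶜ) := by
          refine Filter.limsup_le_limsup hle ?_ ?_
          · refine Filter.IsCoboundedUnder.of_frequently_ge (a := 0) ?_
            apply Filter.Eventually.frequently
            filter_upwards with z
            positivity
          · exact htend.isBoundedUnder_le
      _ = (dist x y + dist x y) / 2 := h2
      _ = dist x y := by ring

lemma helper (a b : ℝ) (e : EReal) (h : (a:EReal) + e = b) : e = ((b - a : ℝ) : EReal) := by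
  induction e using EReal.rec with
  | bot => simp at h
  | coe r => rw [← EReal.coe_add] at h; norm_cast at h ⊢; linarith
  | top => simp at h

theorem statement9 {X : Type*} [MetricSpace X] (φ : X → ℝ)
    (hconc : cTransform (cTransform (fun x : X => (φ x : EReal))) = fun x : X => (φ x : EReal))
    (x : X)
    (hne : ∃ y : X, (φ x : EReal) + cTransform (fun z : X => (φ z : EReal)) y
        = (((dist x y) ^ 2 / 2 : ℝ) : EReal)) :
    Filter.limsup (fun z : X => max (φ z - φ x) 0 / dist z x) (nhdsWithin x {x}ᶜ) ≤
      sInf {d : ℝ | ∃ y : X,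
        ((φ x : EReal) + cTransform (fun z : X => (φ z : EReal)) y
          = (((dist x y) ^ 2 / 2 : ℝ) : EReal)) ∧ d = dist x y} := by
  obtain ⟨y₀, hy₀⟩ := hne
  refine le_csInf ⟨dist x y₀, y₀, hy₀, rfl⟩ ?_
  rintro d ⟨y, hy, rfl⟩
  apply key
  intro z
  -- extract real value of cTransform φ y
  set ψ := cTransform (fun z : X => (φ z : EReal)) with hψ
  have hreal : ψ y = ((dist x y ^ 2 / 2 - φ x : ℝ) : EReal) := helper _ _ _ hy
  have hle : ψ y ≤ (((dist z y) ^ 2 / 2 : ℝ) : EReal) - ((φ z : ℝ) : EReal) :=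
    iInf_le _ z
  rw [hreal, ← EReal.coe_sub, EReal.coe_le_coe_iff] at hle
  nlinarith [hle]
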